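/- arXiv:1811.11830 — 2 statements merged into one kernel-verified Lean document; each statement's English description precedes it below -/
import Mathlib

section
/- Let g be a finite-dimensional Lie algebra over ℂ graded by subspaces (g_i)_{i∈ℤ} (internal direct sum with ⁅g_i,g_j⁆ ⊆ g_{i+j}), let h ≥ 2 be an integer, I ∈ g_{−1}, E ∈ g_{h−1}, and let N = dim g. Then for every μ ∈ ℂ with μ ≠ 0 and every p ∈ ℂ, det(p·id_g + ad(I − μ^h·E)) = μ^N · det((μ^{−1}p)·id_g + ad(I − E)). -/
open DirectSum Module

section aux

variable {g : Type*} [LieRing g] [LieAlgebra ℂ g]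
    (G : ℤ → Submodule ℂ g)

/-- The grading automorphism `σ_c`, acting by `c^i` on `G i`. -/
noncomputable def gradeMap (hG : DirectSum.IsInternal G) (c : ℂ) : Module.End ℂ g :=
  letI e : (⨁ i, G i) ≃ₗ[ℂ] g := LinearEquiv.ofBijective (DirectSum.coeLinearMap G) hG
  (e.toLinearMap ∘ₗ DirectSum.toModule ℂ ℤ (⨁ i, G i)
    (fun i => c ^ i • DirectSum.lof ℂ ℤ (fun i => G i) i)) ∘ₗ e.symm.toLinearMap

lemma gradeMap_apply (hG : DirectSum.IsInternal G) (c : ℂ) (i : ℤ) (x : g) (hx : x ∈ G i) :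
    gradeMap G hG c x = c ^ i • x := by
  set e : (⨁ i, G i) ≃ₗ[ℂ] g := LinearEquiv.ofBijective (DirectSum.coeLinearMap G) hG with he
  have h1 : e.symm x = DirectSum.lof ℂ ℤ (fun i => G i) i ⟨x, hx⟩ := by
    rw [LinearEquiv.symm_apply_eq, he, DirectSum.lof_eq_of]
    exact (DirectSum.coeLinearMap_of G i ⟨x, hx⟩).symm
  simp only [gradeMap, LinearMap.comp_apply, LinearEquiv.coe_coe, ← he, h1,
    DirectSum.toModule_lof, LinearMap.smul_apply, map_smul]
  congr 1
  exact DirectSum.coeLinearMap_of G i ⟨x, hx⟩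

lemma linmap_ext_of_grades (hG : DirectSum.IsInternal G) {f f' : Module.End ℂ g}
    (H : ∀ i : ℤ, ∀ x ∈ G i, f x = f' x) : f = f' := by
  ext x
  have hx : x ∈ ⨆ i, G i := hG.submodule_iSup_eq_top ▸ Submodule.mem_top
  refine Submodule.iSup_induction G (motive := fun y => f y = f' y) hx (fun i y hy => H i y hy) ?_ ?_
  · simp
  · intro a b ha hb; simp [map_add, ha, hb]

end aux

/-- The conjugation identity of Appendix A.3: in a finite-dimensional ℤ-graded complex
Lie algebra, with `I ∈ g₋₁`, `E ∈ g_{h-1}` (`h ≥ 2`) and `N = dim g`, for every `μ ≠ 0`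
and every `p`, `det(p·id + ad(I - μ^h·E)) = μ^N · det((μ⁻¹p)·id + ad(I - E))`. -/
theorem stmt9 {g : Type*} [LieRing g] [LieAlgebra ℂ g] [FiniteDimensional ℂ g]
    (G : ℤ → Submodule ℂ g) (hG : DirectSum.IsInternal G)
    (hbracket : ∀ i j : ℤ, ∀ x ∈ G i, ∀ y ∈ G j, ⁅x, y⁆ ∈ G (i + j))
    (h : ℕ) (hh : 2 ≤ h) (I E : g) (hI : I ∈ G (-1)) (hE : E ∈ G ((h : ℤ) - 1))
    (μ : ℂ) (hμ : μ ≠ 0) (p : ℂ) :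
    LinearMap.det (p • (1 : Module.End ℂ g) + LieAlgebra.ad ℂ g (I - μ ^ h • E)) =
      μ ^ (Module.finrank ℂ g) *
        LinearMap.det ((μ⁻¹ * p) • (1 : Module.End ℂ g) + LieAlgebra.ad ℂ g (I - E)) := by
  set σ := gradeMap G hG μ with hσ
  set τ := gradeMap G hG μ⁻¹ with hτ
  set A := p • (1 : Module.End ℂ g) + LieAlgebra.ad ℂ g (I - μ ^ h • E) with hA
  set C := (μ⁻¹ * p) • (1 : Module.End ℂ g) + LieAlgebra.ad ℂ g (I - E) with hC
  -- σ ∘ τ = 1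
  have hστ : σ ∘ₗ τ = 1 := by
    apply linmap_ext_of_grades G hG
    intro i x hx
    have hτx : τ x = μ⁻¹ ^ i • x := gradeMap_apply G hG μ⁻¹ i x hx
    have hmem : μ⁻¹ ^ i • x ∈ G i := Submodule.smul_mem _ _ hx
    simp only [LinearMap.comp_apply, hτx, gradeMap_apply G hG μ i _ hmem,
      smul_smul, Module.End.one_apply]
    rw [hσ, gradeMap_apply G hG μ i _ hmem, smul_smul, inv_zpow,
      mul_inv_cancel₀ (zpow_ne_zero i hμ), one_smul]
  have hdetσ : LinearMap.det σ ≠ 0 := by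
    intro h0
    have := LinearMap.det_comp σ τ
    rw [hστ, h0, zero_mul] at this
    simp at this
  -- key intertwining: A ∘ σ = σ ∘ (μ • C)
  have hkey : A ∘ₗ σ = σ ∘ₗ (μ • C) := by
    apply linmap_ext_of_grades G hG
    intro i x hx
    have hσx : σ x = μ ^ i • x := gradeMap_apply G hG μ i x hx
    have hIx : ⁅I, x⁆ ∈ G (-1 + i) := hbracket _ _ _ hI _ hx
    have hEx : ⁅E, x⁆ ∈ G (((h : ℤ) - 1) + i) := hbracket _ _ _ hE _ hx
    have hadA : (LieAlgebra.ad ℂ g (I - μ ^ h • E)) = LieAlgebra.ad ℂ g I - μ ^ h • LieAlgebra.ad ℂ g E := by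
      simp [map_sub, map_smul]
    have hadC : (LieAlgebra.ad ℂ g (I - E)) = LieAlgebra.ad ℂ g I - LieAlgebra.ad ℂ g E := by
      simp [map_sub]
    have hσI : σ ⁅I, x⁆ = μ ^ (-1 + i) • ⁅I, x⁆ := gradeMap_apply G hG μ _ _ hIx
    have hσE : σ ⁅E, x⁆ = μ ^ (((h : ℤ) - 1) + i) • ⁅E, x⁆ := gradeMap_apply G hG μ _ _ hEx
    simp only [LinearMap.comp_apply, hσx, hA, hC, hadA, hadC, LinearMap.add_apply,
      LinearMap.smul_apply, Module.End.one_apply, LinearMap.sub_apply, LieAlgebra.ad_apply,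
      map_smul, map_add, map_sub, smul_sub, smul_add, hσI, hσE, smul_smul]
    have e1 : μ ^ i * p = μ * (μ⁻¹ * p) * μ ^ i := by
      field_simp
    have e2 : (μ ^ i : ℂ) = μ * μ ^ (-1 + i) := by
      rw [zpow_add₀ hμ, zpow_neg_one]; field_simp
    have e3 : μ * μ ^ (-1 + i) * μ ^ h = μ * μ ^ (((h : ℤ) - 1) + i) := by
      rw [mul_assoc]
      congr 1
      rw [← zpow_natCast μ h, ← zpow_add₀ hμ]
      congr 1
      ring
    rw [e1, e2, e3]
  -- conclude
  have hdet := congrArg LinearMap.det hkey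
  rw [LinearMap.det_comp, LinearMap.det_comp] at hdet
  have : LinearMap.det A = LinearMap.det (μ • C) := by
    exact mul_right_cancel₀ hdetσ (by rw [mul_comm (LinearMap.det σ)] at hdet; exact hdet)
  rw [this, LinearMap.det_smul]
end

section
/- Let g be a finite-dimensional Lie algebra over ℂ graded by subspaces (g_i)_{i∈ℤ} (internal direct sum with ⁅g_i,g_j⁆ ⊆ g_{i+j}), let h ≥ 2 be an integer, I ∈ g_{−1}, E ∈ g_{h−1}. Assume ad(I − E) is diagonalizable, let n = dim ker(ad(I − E)), and assume dim g = n(h+1). Then for every fixed p ∈ ℂ with p ≠ 0, the function λ ↦ det(p·id_g + ad(I − λ·E)) is a polynomial in λ of degree exactly n. -/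
open Polynomial

section Graded
variable {g : Type*} [LieRing g] [LieAlgebra ℂ g]
variable (G : ℤ → Submodule ℂ g)

noncomputable def gradePhi (hG : DirectSum.IsInternal G) (ν : ℂ) : g →ₗ[ℂ] g :=
  (LinearEquiv.ofBijective (DirectSum.coeLinearMap G) hG).toLinearMap ∘ₗ
  (DFinsupp.mapRange.linearMap (fun i => (ν ^ (i : ℤ)) • (LinearMap.id : G i →ₗ[ℂ] G i))) ∘ₗ
  (LinearEquiv.ofBijective (DirectSum.coeLinearMap G) hG).symm.toLinearMap

theorem gradePhi_apply (hG : DirectSum.IsInternal G) (ν : ℂ) {i : ℤ} {x : g} (hx : x ∈ G i) :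
    gradePhi G hG ν x = (ν ^ (i : ℤ)) • x := by
  set eL := LinearEquiv.ofBijective (DirectSum.coeLinearMap G) hG with heL
  have h1 : eL (DirectSum.of (fun i => G i) i ⟨x, hx⟩) = x := DirectSum.coeLinearMap_of G i ⟨x, hx⟩
  have h2 : eL.symm x = DirectSum.of (fun i => G i) i ⟨x, hx⟩ := by
    rw [LinearEquiv.symm_apply_eq, h1]
  show eL (DFinsupp.mapRange.linearMap _ (eL.symm x)) = _
  rw [h2]
  have h3 : (DFinsupp.mapRange.linearMap (fun i => (ν ^ (i : ℤ)) • (LinearMap.id : G i →ₗ[ℂ] G i)))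
      (DirectSum.of (fun i => G i) i ⟨x, hx⟩)
      = DirectSum.of (fun i => G i) i ((ν ^ (i : ℤ)) • ⟨x, hx⟩) := by
    exact DFinsupp.mapRange_single (hf := fun i => map_zero _)
  rw [h3]
  exact DirectSum.coeLinearMap_of G i _

theorem gradePhi_ext (hG : DirectSum.IsInternal G) {f₁ f₂ : g →ₗ[ℂ] g}
    (hf : ∀ i : ℤ, ∀ x ∈ G i, f₁ x = f₂ x) : f₁ = f₂ := by
  ext x
  have hx : x ∈ ⨆ i, G i := by rw [hG.submodule_iSup_eq_top]; trivial
  refine Submodule.iSup_induction G (motive := fun y => f₁ y = f₂ y) hx (fun i y hy => hf i y hy)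
    (by simp) (fun a b ha hb => by simp [map_add, ha, hb])

theorem gradePhi_comp (hG : DirectSum.IsInternal G) (ν ν' : ℂ) :
    gradePhi G hG ν ∘ₗ gradePhi G hG ν' = gradePhi G hG (ν * ν') := by
  refine gradePhi_ext G hG (fun i x hx => ?_)
  have hx' : (ν' ^ (i : ℤ)) • x ∈ G i := Submodule.smul_mem _ _ hx
  simp only [LinearMap.comp_apply, gradePhi_apply G hG ν' hx, map_smul,
    gradePhi_apply G hG ν hx, gradePhi_apply G hG (ν * ν') hx, smul_smul, mul_zpow]
  ring_nf

theorem gradePhi_one (hG : DirectSum.IsInternal G) : gradePhi G hG 1 = LinearMap.id := by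
  refine gradePhi_ext G hG (fun i x hx => ?_)
  simp [gradePhi_apply G hG 1 hx]

theorem gradePhi_det_ne_zero (hG : DirectSum.IsInternal G) {ν : ℂ} (hν : ν ≠ 0) :
    LinearMap.det (gradePhi G hG ν) ≠ 0 := by
  have h := gradePhi_comp G hG ν ν⁻¹
  rw [mul_inv_cancel₀ hν, gradePhi_one] at h
  have := congrArg LinearMap.det h
  rw [LinearMap.det_comp, LinearMap.det_id] at this
  intro h0; rw [h0, zero_mul] at this; exact zero_ne_one this

theorem gradePhi_bracket (hG : DirectSum.IsInternal G)
    (hbracket : ∀ i j : ℤ, ∀ x ∈ G i, ∀ y ∈ G j, ⁅x, y⁆ ∈ G (i + j))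
    {ν : ℂ} (hν : ν ≠ 0) (x y : g) :
    gradePhi G hG ν ⁅x, y⁆ = ⁅gradePhi G hG ν x, gradePhi G hG ν y⁆ := by
  have hx : x ∈ ⨆ i, G i := by rw [hG.submodule_iSup_eq_top]; trivial
  refine Submodule.iSup_induction G
    (motive := fun a => ∀ b : g, gradePhi G hG ν ⁅a, b⁆ = ⁅gradePhi G hG ν a, gradePhi G hG ν b⁆)
    hx ?_ (by simp) ?_ y
  · intro i a ha b
    have hb : b ∈ ⨆ j, G j := by rw [hG.submodule_iSup_eq_top]; trivial
    refine Submodule.iSup_induction G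
      (motive := fun b => gradePhi G hG ν ⁅a, b⁆ = ⁅gradePhi G hG ν a, gradePhi G hG ν b⁆)
      hb ?_ (by simp) ?_
    · intro j b hbj
      rw [gradePhi_apply G hG ν ha, gradePhi_apply G hG ν hbj,
        gradePhi_apply G hG ν (hbracket i j a ha b hbj), smul_lie, lie_smul, smul_smul,
        ← zpow_add₀ hν]
    · intro b₁ b₂ h₁ h₂
      simp only [lie_add, map_add, h₁, h₂]
  · intro a₁ a₂ h₁ h₂ b
    simp only [add_lie, map_add, h₁ b, h₂ b]

theorem gradePhi_det_inv (hG : DirectSum.IsInternal G)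
    (hbracket : ∀ i j : ℤ, ∀ x ∈ G i, ∀ y ∈ G j, ⁅x, y⁆ ∈ G (i + j))
    {ν : ℂ} (hν : ν ≠ 0) (p : ℂ) (z : g) :
    LinearMap.det (p • (1 : Module.End ℂ g) + LieAlgebra.ad ℂ g (gradePhi G hG ν z)) =
      LinearMap.det (p • (1 : Module.End ℂ g) + LieAlgebra.ad ℂ g z) := by
  set φ := gradePhi G hG ν
  have key : (p • (1 : Module.End ℂ g) + LieAlgebra.ad ℂ g (φ z)) ∘ₗ φ =
      φ ∘ₗ (p • (1 : Module.End ℂ g) + LieAlgebra.ad ℂ g z) := by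
    ext y
    simp only [LinearMap.comp_apply, LinearMap.add_apply, LinearMap.smul_apply,
      Module.End.one_apply, LieAlgebra.ad_apply, map_add, map_smul]
    rw [gradePhi_bracket G hG hbracket hν]
  have hdet := congrArg LinearMap.det key
  rw [LinearMap.det_comp, LinearMap.det_comp] at hdet
  have hd := gradePhi_det_ne_zero G hG hν
  rw [mul_comm (LinearMap.det φ)] at hdet
  exact mul_right_cancel₀ hd hdet
end Graded

theorem det_affine_poly {V : Type*} [AddCommGroup V] [Module ℂ V] [FiniteDimensional ℂ V]
    (A B : V →ₗ[ℂ] V) : ∃ q : Polynomial ℂ, ∀ t : ℂ, LinearMap.det (A - t • B) = q.eval t := by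
  classical
  let b := Module.finBasis ℂ V
  let M₁ := LinearMap.toMatrix b b A
  let M₂ := LinearMap.toMatrix b b B
  refine ⟨((M₁.map C) - (X : Polynomial ℂ) • (M₂.map C)).det, fun t => ?_⟩
  have h1 : ((M₁.map C) - (X : Polynomial ℂ) • (M₂.map C)).map (evalRingHom t) = M₁ - t • M₂ := by
    ext i j
    simp only [Matrix.map_apply, Matrix.sub_apply, Matrix.smul_apply, map_sub, coe_evalRingHom,
      eval_mul, eval_C, eval_X, eval_sub, smul_eq_mul, Matrix.sub_apply]
  calc LinearMap.det (A - t • B) = (LinearMap.toMatrix b b (A - t • B)).det := by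
        rw [LinearMap.det_toMatrix]
    _ = (M₁ - t • M₂).det := by rw [map_sub, map_smul]
    _ = (((M₁.map C) - (X : Polynomial ℂ) • (M₂.map C)).map (evalRingHom t)).det := by rw [h1]
    _ = (evalRingHom t) ((M₁.map C) - (X : Polynomial ℂ) • (M₂.map C)).det := by
        rw [RingHom.map_det]; rfl
  
theorem det_eigenbasis {V : Type*} [AddCommGroup V] [Module ℂ V] {ι : Type*} [Fintype ι]
    [DecidableEq ι] (b : Module.Basis ι ℂ V) (f : V →ₗ[ℂ] V) (c : ι → ℂ)
    (hf : ∀ i, f (b i) = c i • b i) (p ν : ℂ) :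
    LinearMap.det (p • (1 : Module.End ℂ V) + ν • f) = ∏ i, (p + ν * c i) := by
  have h1 : LinearMap.toMatrix b b (p • (1 : Module.End ℂ V) + ν • f) =
      Matrix.diagonal (fun i => p + ν * c i) := by
    ext i j
    rw [LinearMap.toMatrix_apply]
    simp only [LinearMap.add_apply, LinearMap.smul_apply, Module.End.one_apply, hf j, map_add,
      map_smul, Module.Basis.repr_self]
    by_cases hij : i = j
    · subst hij; simp [Matrix.diagonal, mul_comm]
    · simp [Matrix.diagonal, hij, Finsupp.single_apply, Ne.symm hij]
  rw [← LinearMap.det_toMatrix b, h1, Matrix.det_diagonal]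

/-- The key step of Appendix A.3 (used for Theorem 6.2): in a finite-dimensional ℤ-graded
complex Lie algebra with `I ∈ g₋₁`, `E ∈ g_{h-1}` (`h ≥ 2`), if `ad(I - E)` is
diagonalizable, `n = dim ker(ad(I - E))`, and `dim g = n(h+1)`, then for every fixed
`p ≠ 0` the function `λ ↦ det(p·id + ad(I - λ·E))` is a polynomial in `λ` of degree
exactly `n`. -/
theorem stmt11 {g : Type*} [LieRing g] [LieAlgebra ℂ g] [FiniteDimensional ℂ g]
    (G : ℤ → Submodule ℂ g) (hG : DirectSum.IsInternal G)
    (hbracket : ∀ i j : ℤ, ∀ x ∈ G i, ∀ y ∈ G j, ⁅x, y⁆ ∈ G (i + j))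
    (h : ℕ) (hh : 2 ≤ h) (I E : g) (hI : I ∈ G (-1)) (hE : E ∈ G ((h : ℤ) - 1))
    (hdiag : (⨆ c : ℂ, Module.End.eigenspace (LieAlgebra.ad ℂ g (I - E)) c) = ⊤)
    (n : ℕ) (hn : n = Module.finrank ℂ (LinearMap.ker (LieAlgebra.ad ℂ g (I - E))))
    (hdim : Module.finrank ℂ g = n * (h + 1)) :
    ∀ p : ℂ, p ≠ 0 → ∃ q : Polynomial ℂ, q.degree = (n : ℕ) ∧
      ∀ lam : ℂ,
        LinearMap.det (p • (1 : Module.End ℂ g) + LieAlgebra.ad ℂ g (I - lam • E)) =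
          q.eval lam := by
  classical
  intro p hp
  set A := LieAlgebra.ad ℂ g (I - E) with hA
  -- eigenbasis of A
  have hInt : DirectSum.IsInternal (fun c : ℂ => Module.End.eigenspace A c) :=
    DirectSum.isInternal_submodule_of_iSupIndep_of_iSup_eq_top
      (Module.End.eigenspaces_iSupIndep A) hdiag
  let κ : ℂ → Type _ := fun c => Fin (Module.finrank ℂ (Module.End.eigenspace A c))
  let bc : ∀ c, Module.Basis (κ c) ℂ (Module.End.eigenspace A c) := fun c => Module.finBasis ℂ _
  let b : Module.Basis (Σ c : ℂ, κ c) ℂ g := hInt.collectedBasis bc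
  haveI : Fintype (Σ c : ℂ, κ c) := FiniteDimensional.fintypeBasisIndex b
  have hb : ∀ i : Σ c : ℂ, κ c, A (b i) = i.1 • b i := by
    intro i
    exact Module.End.mem_eigenspace_iff.mp (hInt.collectedBasis_mem bc i)
  -- cardinalities
  have hcard : Fintype.card (Σ c : ℂ, κ c) = n * (h + 1) := by
    rw [← Module.finrank_eq_card_basis b, hdim]
  have hzero : (Finset.univ.filter fun i : Σ c : ℂ, κ c => i.1 = 0).card = n := by
    rw [← Fintype.card_subtype]
    have e : κ 0 ≃ {i : Σ c : ℂ, κ c // i.1 = 0} := by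
      refine Equiv.ofBijective (fun k => ⟨⟨0, k⟩, rfl⟩) ⟨?_, ?_⟩
      · intro k k' hkk'
        exact eq_of_heq (Sigma.mk.inj_iff.mp (congrArg Subtype.val hkk')).2
      · rintro ⟨⟨c, k⟩, hc⟩
        dsimp at hc
        subst hc
        exact ⟨k, rfl⟩
    rw [← Fintype.card_congr e]
    show Fintype.card (Fin (Module.finrank ℂ (Module.End.eigenspace A 0))) = n
    rw [Fintype.card_fin, Module.End.eigenspace_zero]
    exact hn.symm
  have hnonzero : (Finset.univ.filter fun i : Σ c : ℂ, κ c => ¬ i.1 = 0).card = n * h := by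
    have := Finset.card_filter_add_card_filter_not
      (s := (Finset.univ : Finset (Σ c : ℂ, κ c))) (p := fun i => i.1 = 0)
    rw [hzero, Finset.card_univ, hcard, show n * (h + 1) = n * h + n by ring] at this
    omega
  -- the polynomial q
  obtain ⟨q, hq⟩ := det_affine_poly (p • (1 : Module.End ℂ g) + LieAlgebra.ad ℂ g I)
    (LieAlgebra.ad ℂ g E)
  have heval : ∀ lam : ℂ,
      LinearMap.det (p • (1 : Module.End ℂ g) + LieAlgebra.ad ℂ g (I - lam • E)) =
        q.eval lam := by
    intro lam
    rw [← hq lam]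
    congr 1
    rw [map_sub, map_smul]
    abel
  refine ⟨q, ?_, heval⟩
  -- the key scaling identity
  have key : ∀ ν : ℂ, ν ≠ 0 → q.eval (ν ^ h) = ∏ i : (Σ c : ℂ, κ c), (p + ν * i.1) := by
    intro ν hν
    have hν' : (ν⁻¹ : ℂ) ≠ 0 := inv_ne_zero hν
    have hφ : gradePhi G hG ν⁻¹ (I - (ν ^ h) • E) = ν • (I - E) := by
      rw [map_sub, map_smul, gradePhi_apply G hG ν⁻¹ hI, gradePhi_apply G hG ν⁻¹ hE]
      have h1 : (ν⁻¹ : ℂ) ^ (-1 : ℤ) = ν := by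
        rw [zpow_neg_one, inv_inv]
      have h2 : (ν ^ h) • ((ν⁻¹ : ℂ) ^ ((h : ℤ) - 1)) • E = ν • E := by
        rw [smul_smul]
        congr 1
        rw [← zpow_natCast ν h, inv_zpow, ← zpow_neg, ← zpow_add₀ hν]
        rw [show (h : ℤ) + -((h : ℤ) - 1) = 1 by ring, zpow_one]
      rw [h1, h2, smul_sub]
    calc q.eval (ν ^ h)
        = LinearMap.det (p • (1 : Module.End ℂ g) + LieAlgebra.ad ℂ g (I - (ν ^ h) • E)) :=
          (heval (ν ^ h)).symm
      _ = LinearMap.det (p • (1 : Module.End ℂ g) +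
            LieAlgebra.ad ℂ g (gradePhi G hG ν⁻¹ (I - (ν ^ h) • E))) :=
          (gradePhi_det_inv G hG hbracket hν' p _).symm
      _ = LinearMap.det (p • (1 : Module.End ℂ g) + ν • A) := by rw [hφ, map_smul]
      _ = ∏ i : (Σ c : ℂ, κ c), (p + ν * i.1) :=
          det_eigenbasis b A (fun i => i.1) hb p ν
  -- P and the polynomial identity
  set P : Polynomial ℂ := ∏ i : (Σ c : ℂ, κ c), (Polynomial.C i.1 * Polynomial.X +
    Polynomial.C p) with hP
  have hPeval : ∀ ν : ℂ, P.eval ν = ∏ i : (Σ c : ℂ, κ c), (p + ν * i.1) := by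
    intro ν
    rw [hP, Polynomial.eval_prod]
    refine Finset.prod_congr rfl fun i _ => ?_
    simp only [Polynomial.eval_add, Polynomial.eval_mul, Polynomial.eval_C, Polynomial.eval_X]
    ring
  have hcomp : q.comp (Polynomial.X ^ h) = P := by
    rw [← sub_eq_zero]
    apply Polynomial.eq_zero_of_infinite_isRoot
    apply Set.Infinite.mono (s := {ν : ℂ | ν ≠ 0})
    · intro ν hν
      simp only [Set.mem_setOf_eq, Polynomial.IsRoot, Polynomial.eval_sub,
        Polynomial.eval_comp, Polynomial.eval_pow, Polynomial.eval_X, sub_eq_zero]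
      rw [key ν hν, hPeval ν]
    · exact (Set.finite_singleton (0 : ℂ)).infinite_compl
  -- degree bookkeeping
  have hfac_ne : ∀ i : (Σ c : ℂ, κ c),
      (Polynomial.C i.1 * Polynomial.X + Polynomial.C p) ≠ 0 := by
    intro i h0
    have : (Polynomial.C i.1 * Polynomial.X + Polynomial.C p).eval 0 = p := by simp
    rw [h0] at this
    simp at this
    exact hp this.symm
  have hPne : P ≠ 0 := by
    rw [hP]
    exact Finset.prod_ne_zero_iff.mpr fun i _ => hfac_ne i
  have hqne : q ≠ 0 := by
    intro h0
    rw [h0, Polynomial.zero_comp] at hcomp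
    exact hPne hcomp.symm
  have hdegP : P.natDegree = n * h := by
    rw [hP, Polynomial.natDegree_prod _ _ fun i _ => hfac_ne i]
    have hterm : ∀ i : (Σ c : ℂ, κ c),
        (Polynomial.C i.1 * Polynomial.X + Polynomial.C p).natDegree =
          if i.1 = 0 then 0 else 1 := by
      intro i
      by_cases hi : i.1 = 0
      · simp [hi]
      · rw [if_neg hi, Polynomial.natDegree_linear hi]
    rw [Finset.sum_congr rfl fun i _ => hterm i]
    have hsum : (∑ i : (Σ c : ℂ, κ c), if i.1 = 0 then 0 else 1) =
        (Finset.univ.filter fun i : Σ c : ℂ, κ c => ¬ i.1 = 0).card := by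
      rw [Finset.card_filter]
      refine Finset.sum_congr rfl fun i _ => ?_
      by_cases hi : i.1 = 0 <;> simp [hi]
    rw [hsum, hnonzero]
  have hdegQcomp : q.natDegree * h = n * h := by
    have hnd := congrArg Polynomial.natDegree hcomp
    rwa [Polynomial.natDegree_comp, Polynomial.natDegree_X_pow, hdegP] at hnd
  have hqn : q.natDegree = n := Nat.eq_of_mul_eq_mul_right (by omega) hdegQcomp
  rw [Polynomial.degree_eq_natDegree hqne, hqn]
end
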